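/- Let k₀ ∈ ℕ and let U₁,...,U_{k₀} be random variables, U_i taking values in X^{d_i}, such that U_i is F_{m_i,n_i}-measurable where n_{i−1} < m_i ≤ n_i < m_{i+1} for i = 1,...,k₀ (with n₀ = −∞ and m_{k₀+1} = ∞). Let {C_j : 1 ≤ j ≤ s} be a partition of {1,...,k₀}, let U(C_j) = {U_i : i ∈ C_j}, and let U^{(j)}(C_j) = {U_i^{(j)} : i ∈ C_j}, j = 1,...,s, be mutually independent copies of the U(C_j)'s; for each i let a_i be the unique index with i ∈ C_{a_i}. Then for every bounded Borel function H : X^{d₁+···+d_{k₀}} → ℝ, |E[H(U₁,...,U_{k₀})] − E[H(U₁^{(a₁)},...,U_{k₀}^{(a_{k₀})})]| ≤ 4 sup|H| · Σ_{i=2}^{k₀} φ(m_i − n_{i−1}). -/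

import Mathlib

open MeasureTheory ProbabilityTheory Filter
open scoped ENNReal NNReal

/-- The φ-dependence coefficient between two sub-σ-algebras. -/
noncomputable def phiDep {Ω : Type*} [MeasurableSpace Ω] (P : Measure Ω)
    (𝔊 ℌ : MeasurableSpace Ω) : ℝ :=
  sSup {x : ℝ | ∃ A B : Set Ω, MeasurableSet[𝔊] A ∧ MeasurableSet[ℌ] B ∧ 0 < P A ∧
    x = |(P (A ∩ B) / P A).toReal - (P B).toReal|}

/-- The φ-mixing coefficients of a family of σ-algebras `F n m`:
`φ(n) = sup_k φ(F_{−∞,k}, F_{k+n,∞})`. -/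
noncomputable def mixPhi {Ω : Type*} [MeasurableSpace Ω] (P : Measure Ω)
    (F : ℤ → ℤ → MeasurableSpace Ω) (n : ℕ) : ℝ :=
  ⨆ k : ℤ, phiDep P (⨆ j : {j : ℤ // j ≤ k}, F j.1 k)
    (⨆ m : {m : ℤ // k + (n : ℤ) ≤ m}, F (k + (n : ℤ)) m.1)

section PhiDep

variable {Ω : Type*} {𝔊 ℌ : MeasurableSpace Ω} [mΩ : MeasurableSpace Ω] (P : Measure Ω)
variable [IsProbabilityMeasure P]

lemma phiDep_mem_le_one {x : ℝ}
    (hx : x ∈ {x : ℝ | ∃ A B : Set Ω, MeasurableSet[𝔊] A ∧ MeasurableSet[ℌ] B ∧ 0 < P A ∧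
      x = |(P (A ∩ B) / P A).toReal - (P B).toReal|}) : x ≤ 1 := by
  obtain ⟨A, B, -, -, -, rfl⟩ := hx
  have h1 : (P (A ∩ B) / P A) ≤ 1 :=
    ENNReal.div_le_of_le_mul (by simpa using measure_mono (Set.inter_subset_left (t := B)))
  have h1' : (P (A ∩ B) / P A).toReal ≤ 1 := by
    simpa using ENNReal.toReal_mono ENNReal.one_ne_top h1
  have h2 : (P B).toReal ≤ 1 := by
    simpa using ENNReal.toReal_mono ENNReal.one_ne_top (prob_le_one (μ := P) (s := B))
  have h3 : 0 ≤ (P (A ∩ B) / P A).toReal := ENNReal.toReal_nonneg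
  have h4 : 0 ≤ (P B).toReal := ENNReal.toReal_nonneg
  rw [abs_sub_le_iff]; constructor <;> linarith

lemma phiDep_zero_mem :
    (0 : ℝ) ∈ {x : ℝ | ∃ A B : Set Ω, MeasurableSet[𝔊] A ∧ MeasurableSet[ℌ] B ∧ 0 < P A ∧
      x = |(P (A ∩ B) / P A).toReal - (P B).toReal|} := by
  refine ⟨Set.univ, Set.univ, MeasurableSet.univ, MeasurableSet.univ, by simp, by simp⟩

lemma phiDep_bddAbove : BddAbove {x : ℝ | ∃ A B : Set Ω, MeasurableSet[𝔊] A ∧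
    MeasurableSet[ℌ] B ∧ 0 < P A ∧ x = |(P (A ∩ B) / P A).toReal - (P B).toReal|} :=
  ⟨1, fun _ hx => phiDep_mem_le_one P hx⟩

lemma phiDep_nonneg : 0 ≤ phiDep P 𝔊 ℌ :=
  le_csSup (phiDep_bddAbove P) (phiDep_zero_mem P)

lemma phiDep_le_one : phiDep P 𝔊 ℌ ≤ 1 :=
  csSup_le ⟨0, phiDep_zero_mem P⟩ (fun _ hx => phiDep_mem_le_one P hx)

lemma le_phiDep {A B : Set Ω} (hA : MeasurableSet[𝔊] A) (hB : MeasurableSet[ℌ] B)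
    (hPA : 0 < P A) :
    |(P (A ∩ B) / P A).toReal - (P B).toReal| ≤ phiDep P 𝔊 ℌ :=
  le_csSup (phiDep_bddAbove P) ⟨A, B, hA, hB, hPA, rfl⟩

end PhiDep

lemma phiDep_mono {Ω : Type*} {𝔊 ℌ 𝔊' ℌ' : MeasurableSpace Ω} [mΩ : MeasurableSpace Ω]
    (P : Measure Ω) [IsProbabilityMeasure P] (h1 : 𝔊 ≤ 𝔊') (h2 : ℌ ≤ ℌ') :
    phiDep P 𝔊 ℌ ≤ phiDep P 𝔊' ℌ' := by
  refine csSup_le_csSup (phiDep_bddAbove P) ⟨0, phiDep_zero_mem P⟩ ?_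
  rintro x ⟨A, B, hA, hB, hPA, rfl⟩
  exact ⟨A, B, h1 _ hA, h2 _ hB, hPA, rfl⟩

section PhiDep2

variable {Ω : Type*} {𝔊 ℌ : MeasurableSpace Ω} [mΩ : MeasurableSpace Ω] (P : Measure Ω)
variable [IsProbabilityMeasure P]

/-- Rectangle bound. -/
lemma phiDep_rect {A B : Set Ω} (hA : MeasurableSet[𝔊] A) (hB : MeasurableSet[ℌ] B) :
    |(P (A ∩ B)).toReal - (P A).toReal * (P B).toReal| ≤ phiDep P 𝔊 ℌ * (P A).toReal := by
  rcases eq_or_lt_of_le (zero_le : (0:ℝ≥0∞) ≤ P A) with h0 | hpos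
  · have hAB : P (A ∩ B) = 0 := measure_mono_null Set.inter_subset_left h0.symm
    simp [hAB, ← h0]
  · have hne : P A ≠ ⊤ := measure_ne_top P A
    have hpa : 0 < (P A).toReal := ENNReal.toReal_pos hpos.ne' hne
    have key := le_phiDep P hA hB hpos
    have hr : (P (A ∩ B) / P A).toReal = (P (A ∩ B)).toReal / (P A).toReal :=
      ENNReal.toReal_div _ _
    rw [hr] at key
    have : |(P (A ∩ B)).toReal - (P A).toReal * (P B).toReal|
        = (P A).toReal * |(P (A ∩ B)).toReal / (P A).toReal - (P B).toReal| := by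
      rw [← abs_of_pos hpa, ← abs_mul]
      congr 1
      field_simp
      rw [abs_of_pos hpa]
      ring
    rw [this, mul_comm (phiDep P 𝔊 ℌ)]
    exact mul_le_mul_of_nonneg_left key hpa.le

lemma mixPhi_nonneg (F : ℤ → ℤ → MeasurableSpace Ω) (g : ℕ) : 0 ≤ mixPhi P F g :=
  Real.iSup_nonneg (fun _ => phiDep_nonneg P)

lemma le_mixPhi (F : ℤ → ℤ → MeasurableSpace Ω) (g : ℕ) (k : ℤ) :
    phiDep P (⨆ j : {j : ℤ // j ≤ k}, F j.1 k)
      (⨆ m : {m : ℤ // k + (g : ℤ) ≤ m}, F (k + (g : ℤ)) m.1) ≤ mixPhi P F g :=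
  le_ciSup (f := fun k : ℤ => phiDep P (⨆ j : {j : ℤ // j ≤ k}, F j.1 k)
    (⨆ m : {m : ℤ // k + (g : ℤ) ≤ m}, F (k + (g : ℤ)) m.1))
    ⟨1, by rintro x ⟨k', rfl⟩; exact phiDep_le_one P⟩ k

end PhiDep2
universe u

section TVLe

open scoped symmDiff

variable {γ δ : Type*} [MeasurableSpace γ] [MeasurableSpace δ]

/-- `TVLe μ ν c`: the measures of any measurable set differ by at most `c`. -/
def TVLe (μ ν : Measure γ) (c : ℝ) : Prop :=
  ∀ S : Set γ, MeasurableSet S → |(μ S).toReal - (ν S).toReal| ≤ c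

namespace TVLe

variable {μ ν ρ : Measure γ} {c c' : ℝ}

lemma nonneg (h : TVLe μ ν c) : 0 ≤ c := by simpa using h ∅ MeasurableSet.empty

lemma symm (h : TVLe μ ν c) : TVLe ν μ c := fun S hS => by
  rw [abs_sub_comm]; exact h S hS

lemma mono_c (h : TVLe μ ν c) (hcc : c ≤ c') : TVLe μ ν c' :=
  fun S hS => (h S hS).trans hcc

lemma trans (h1 : TVLe μ ρ c) (h2 : TVLe ρ ν c') : TVLe μ ν (c + c') := fun S hS => by
  have := abs_sub_abs_le_abs_sub ((μ S).toReal - (ρ S).toReal) 0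
  calc |(μ S).toReal - (ν S).toReal|
      ≤ |(μ S).toReal - (ρ S).toReal| + |(ρ S).toReal - (ν S).toReal| := abs_sub_le _ _ _
    _ ≤ c + c' := add_le_add (h1 S hS) (h2 S hS)

lemma of_eq (h : μ = ν) : TVLe μ ν 0 := fun S _ => by simp [h]

lemma map (h : TVLe μ ν c) {f : γ → δ} (hf : Measurable f) :
    TVLe (Measure.map f μ) (Measure.map f ν) c := fun S hS => by
  rw [Measure.map_apply hf hS, Measure.map_apply hf hS]
  exact h _ (hf hS)

lemma of_measurePreserving {μ₁ ν₁ : Measure γ} {μ₂ ν₂ : Measure δ} (e : γ ≃ᵐ δ)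
    (h1 : Measure.map e μ₁ = μ₂) (h2 : Measure.map e ν₁ = ν₂) (h : TVLe μ₂ ν₂ c) :
    TVLe μ₁ ν₁ c := by
  intro S hS
  have hT : MeasurableSet (e.symm ⁻¹' S) := e.symm.measurable hS
  have key : ∀ (κ : Measure γ), κ S = (Measure.map e κ) (e.symm ⁻¹' S) := fun κ => by
    rw [Measure.map_apply e.measurable hT]
    congr 1
    ext x; simp
  rw [key μ₁, key ν₁, h1, h2]
  exact h _ hT

end TVLe

lemma tvle_of_subsingleton [Subsingleton γ] (μ ν : Measure γ) [IsProbabilityMeasure μ]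
    [IsProbabilityMeasure ν] : TVLe μ ν 0 := by
  intro S _
  rcases Set.eq_empty_or_nonempty S with rfl | ⟨x, hx⟩
  · simp
  · have : S = Set.univ := by
      ext y; simpa [Subsingleton.elim y x] using hx
    simp [this]

lemma TVLe.prod_left {α β : Type*} [MeasurableSpace α] [MeasurableSpace β]
    (ρ : Measure α) [IsProbabilityMeasure ρ] {μ ν : Measure β} [IsProbabilityMeasure μ]
    [IsProbabilityMeasure ν] {c : ℝ} (h : TVLe μ ν c) : TVLe (ρ.prod μ) (ρ.prod ν) c := by
  intro S hS
  rw [Measure.prod_apply hS, Measure.prod_apply hS]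
  have hmf : Measurable fun x => μ (Prod.mk x ⁻¹' S) := measurable_measure_prodMk_left hS
  have hmg : Measurable fun x => ν (Prod.mk x ⁻¹' S) := measurable_measure_prodMk_left hS
  have hb : ∀ (κ : Measure β) (_ : IsProbabilityMeasure κ) x, (κ (Prod.mk x ⁻¹' S)).toReal ≤ 1 :=
    fun κ _ x => by simpa using ENNReal.toReal_mono ENNReal.one_ne_top prob_le_one
  have h1 : (∫⁻ x, μ (Prod.mk x ⁻¹' S) ∂ρ).toReal = ∫ x, (μ (Prod.mk x ⁻¹' S)).toReal ∂ρ :=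
    (integral_toReal hmf.aemeasurable (ae_of_all _ fun x => measure_lt_top μ _)).symm
  have h2 : (∫⁻ x, ν (Prod.mk x ⁻¹' S) ∂ρ).toReal = ∫ x, (ν (Prod.mk x ⁻¹' S)).toReal ∂ρ :=
    (integral_toReal hmg.aemeasurable (ae_of_all _ fun x => measure_lt_top ν _)).symm
  have int1 : Integrable (fun x => (μ (Prod.mk x ⁻¹' S)).toReal) ρ := by
    refine (integrable_const (1 : ℝ)).mono' hmf.ennreal_toReal.aestronglyMeasurable
      (ae_of_all _ fun x => ?_)
    rw [Real.norm_eq_abs, abs_of_nonneg ENNReal.toReal_nonneg]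
    exact hb μ inferInstance x
  have int2 : Integrable (fun x => (ν (Prod.mk x ⁻¹' S)).toReal) ρ := by
    refine (integrable_const (1 : ℝ)).mono' hmg.ennreal_toReal.aestronglyMeasurable
      (ae_of_all _ fun x => ?_)
    rw [Real.norm_eq_abs, abs_of_nonneg ENNReal.toReal_nonneg]
    exact hb ν inferInstance x
  rw [h1, h2, ← integral_sub int1 int2]
  calc |∫ x, ((μ (Prod.mk x ⁻¹' S)).toReal - (ν (Prod.mk x ⁻¹' S)).toReal) ∂ρ|
      ≤ ∫ x, |(μ (Prod.mk x ⁻¹' S)).toReal - (ν (Prod.mk x ⁻¹' S)).toReal| ∂ρ := by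
        simpa [Real.norm_eq_abs] using norm_integral_le_integral_norm (μ := ρ)
          (f := fun x => (μ (Prod.mk x ⁻¹' S)).toReal - (ν (Prod.mk x ⁻¹' S)).toReal)
    _ ≤ ∫ _x, c ∂ρ := by
        refine integral_mono (int1.sub int2).abs (integrable_const c) fun x => ?_
        exact h _ (measurable_prodMk_left hS)
    _ = c := by simp
  
lemma TVLe.prod_right {α β : Type*} [MeasurableSpace α] [MeasurableSpace β]
    (ρ : Measure β) [IsProbabilityMeasure ρ] {μ ν : Measure α} [IsProbabilityMeasure μ]
    [IsProbabilityMeasure ν] {c : ℝ} (h : TVLe μ ν c) : TVLe (μ.prod ρ) (ν.prod ρ) c := by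
  have h1 : Measure.map Prod.swap (ρ.prod μ) = μ.prod ρ := Measure.prod_swap
  have h2 : Measure.map Prod.swap (ρ.prod ν) = ν.prod ρ := Measure.prod_swap
  rw [← h1, ← h2]
  exact (h.prod_left ρ).map measurable_swap

lemma TVLe.pi : ∀ (K : ℕ) (E : Fin K → Type u) (_ : ∀ i, MeasurableSpace (E i))
    (μ ν : ∀ i, Measure (E i)) (_ : ∀ i, IsProbabilityMeasure (μ i))
    (_ : ∀ i, IsProbabilityMeasure (ν i)) (c : Fin K → ℝ)
    (_ : ∀ i, TVLe (μ i) (ν i) (c i)),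
    TVLe (Measure.pi μ) (Measure.pi ν) (∑ i, c i) := by
  intro K
  induction K with
  | zero =>
    intro E iE μ ν hμ hν c h
    have : (∑ i, c i) = 0 := by simp
    rw [this]
    exact tvle_of_subsingleton _ _
  | succ K ih =>
    intro E iE μ ν hμ hν c h
    have hμ' := hμ; have hν' := hν
    set e := MeasurableEquiv.piFinSuccAbove E 0 with he
    have hpres1 : Measure.map e (Measure.pi μ)
        = (μ 0).prod (Measure.pi fun j => μ ((0 : Fin (K+1)).succAbove j)) :=
      (measurePreserving_piFinSuccAbove μ 0).map_eq
    have hpres2 : Measure.map e (Measure.pi ν)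
        = (ν 0).prod (Measure.pi fun j => ν ((0 : Fin (K+1)).succAbove j)) :=
      (measurePreserving_piFinSuccAbove ν 0).map_eq
    have hrest : TVLe (Measure.pi fun j => μ ((0 : Fin (K+1)).succAbove j))
        (Measure.pi fun j => ν ((0 : Fin (K+1)).succAbove j))
        (∑ j : Fin K, c ((0 : Fin (K+1)).succAbove j)) :=
      ih _ _ _ _ (fun j => hμ _) (fun j => hν _) _ (fun j => h _)
    have t1 : TVLe ((μ 0).prod (Measure.pi fun j => μ ((0 : Fin (K+1)).succAbove j)))
        ((μ 0).prod (Measure.pi fun j => ν ((0 : Fin (K+1)).succAbove j)))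
        (∑ j : Fin K, c ((0 : Fin (K+1)).succAbove j)) := hrest.prod_left (μ 0)
    have t2 : TVLe ((μ 0).prod (Measure.pi fun j => ν ((0 : Fin (K+1)).succAbove j)))
        ((ν 0).prod (Measure.pi fun j => ν ((0 : Fin (K+1)).succAbove j))) (c 0) :=
      (h 0).prod_right _
    have tri := (t1.trans t2)
    have := TVLe.of_measurePreserving e hpres1 hpres2 tri
    have hsum : (∑ i, c i) = (∑ j : Fin K, c ((0 : Fin (K+1)).succAbove j)) + c 0 := by
      rw [Fin.sum_univ_succAbove c 0, add_comm]
    rw [hsum]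
    exact this

end TVLe
section Strips

open scoped symmDiff

variable {α β : Type*} [MeasurableSpace α] [MeasurableSpace β]

/-- Finite unions of rectangles with pairwise disjoint bases. -/
def strips (α β : Type*) [MeasurableSpace α] [MeasurableSpace β] : Set (Set (α × β)) :=
  {S | ∃ (N : ℕ) (A : Fin N → Set α) (B : Fin N → Set β),
    (∀ i, MeasurableSet (A i)) ∧ (∀ i, MeasurableSet (B i)) ∧
    (Pairwise (Function.onFun Disjoint A)) ∧ S = ⋃ i, A i ×ˢ B i}

lemma strips_measurableSet {S : Set (α × β)} (hS : S ∈ strips α β) : MeasurableSet S := by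
  obtain ⟨N, A, B, hA, hB, -, rfl⟩ := hS
  exact MeasurableSet.iUnion fun i => (hA i).prod (hB i)

lemma empty_mem_strips : (∅ : Set (α × β)) ∈ strips α β :=
  ⟨0, (fun i => i.elim0), (fun i => i.elim0), (fun i => i.elim0), (fun i => i.elim0),
    (fun i => i.elim0), by simp⟩

lemma prod_mem_strips {A : Set α} {B : Set β} (hA : MeasurableSet A) (hB : MeasurableSet B) :
    A ×ˢ B ∈ strips α β :=
  ⟨1, fun _ => A, fun _ => B, fun _ => hA, fun _ => hB, Subsingleton.pairwise,
    (Set.iUnion_const _).symm⟩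

lemma compl_mem_strips {S : Set (α × β)} (hS : S ∈ strips α β) : Sᶜ ∈ strips α β := by
  obtain ⟨N, A, B, hA, hB, hd, rfl⟩ := hS
  refine ⟨N + 1, Fin.cons (⋃ i, A i)ᶜ A, Fin.cons Set.univ (fun i => (B i)ᶜ), ?_, ?_, ?_, ?_⟩
  · intro i
    refine Fin.cases ?_ ?_ i
    · simpa using (MeasurableSet.iUnion hA).compl
    · intro j; simpa using hA j
  · intro i
    refine Fin.cases ?_ ?_ i
    · simp
    · intro j; simpa using (hB j).compl
  · intro i j hij
    rcases Fin.eq_zero_or_eq_succ i with rfl | ⟨i', rfl⟩ <;>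
      rcases Fin.eq_zero_or_eq_succ j with rfl | ⟨j', rfl⟩
    · exact absurd rfl hij
    · simp only [Function.onFun, Fin.cons_zero, Fin.cons_succ]
      exact Set.disjoint_left.2 fun x hx hxj => hx (Set.mem_iUnion.2 ⟨j', hxj⟩)
    · simp only [Function.onFun, Fin.cons_zero, Fin.cons_succ]
      exact Set.disjoint_right.2 fun x hx hxj => hx (Set.mem_iUnion.2 ⟨i', hxj⟩)
    · simp only [Function.onFun, Fin.cons_succ]
      exact hd (fun hc => hij (congrArg Fin.succ hc))
  · ext ⟨x, y⟩
    simp only [Set.mem_compl_iff, Set.mem_iUnion, Set.mem_prod, not_exists, not_and]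
    constructor
    · intro hxy
      by_cases hx : ∃ i, x ∈ A i
      · obtain ⟨i, hxi⟩ := hx
        exact ⟨i.succ, by simpa using hxi, by simpa using hxy i hxi⟩
      · exact ⟨0, by simpa using fun i hi => hx ⟨i, hi⟩, by simp⟩
    · rintro ⟨i, hxi, hyi⟩ j hxj
      rcases Fin.eq_zero_or_eq_succ i with rfl | ⟨i', rfl⟩
      · exact absurd (Set.mem_iUnion.2 ⟨j, hxj⟩) (by simpa using hxi)
      · simp only [Fin.cons_succ, Set.mem_compl_iff] at hxi hyi
        rcases eq_or_ne i' j with rfl | hne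
        · exact hyi
        · exact absurd hxj (Set.disjoint_left.1 (hd hne) hxi)
  
lemma inter_mem_strips {S T : Set (α × β)} (hS : S ∈ strips α β) (hT : T ∈ strips α β) :
    S ∩ T ∈ strips α β := by
  obtain ⟨N, A, B, hA, hB, hdA, rfl⟩ := hS
  obtain ⟨M, C, D, hC, hD, hdC, rfl⟩ := hT
  refine ⟨N * M, fun p => A (finProdFinEquiv.symm p).1 ∩ C (finProdFinEquiv.symm p).2,
    fun p => B (finProdFinEquiv.symm p).1 ∩ D (finProdFinEquiv.symm p).2,
    fun p => (hA _).inter (hC _), fun p => (hB _).inter (hD _), ?_, ?_⟩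
  · intro p q hpq
    have hne : finProdFinEquiv.symm p ≠ finProdFinEquiv.symm q :=
      finProdFinEquiv.symm.injective.ne hpq
    rcases eq_or_ne (finProdFinEquiv.symm p).1 (finProdFinEquiv.symm q).1 with h1 | h1
    · have h2 : (finProdFinEquiv.symm p).2 ≠ (finProdFinEquiv.symm q).2 := fun hc =>
        hne (Prod.ext h1 hc)
      exact Set.disjoint_left.2 fun x hx hx' =>
        Set.disjoint_left.1 (hdC h2) hx.2 hx'.2
    · exact Set.disjoint_left.2 fun x hx hx' =>
        Set.disjoint_left.1 (hdA h1) hx.1 hx'.1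
  · ext ⟨x, y⟩
    simp only [Set.mem_inter_iff, Set.mem_iUnion, Set.mem_prod]
    constructor
    · rintro ⟨⟨i, hxi, hyi⟩, ⟨j, hxj, hyj⟩⟩
      refine ⟨finProdFinEquiv (i, j), ?_⟩
      simp only [Equiv.symm_apply_apply]
      exact ⟨⟨hxi, hxj⟩, hyi, hyj⟩
    · rintro ⟨p, ⟨hxi, hxj⟩, ⟨hyi, hyj⟩⟩
      exact ⟨⟨_, hxi, hyi⟩, ⟨_, hxj, hyj⟩⟩

lemma union_mem_strips {S T : Set (α × β)} (hS : S ∈ strips α β) (hT : T ∈ strips α β) :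
    S ∪ T ∈ strips α β := by
  have h := compl_mem_strips (inter_mem_strips (compl_mem_strips hS) (compl_mem_strips hT))
  rwa [Set.compl_inter, compl_compl, compl_compl] at h

lemma biUnion_range_mem_strips {E : ℕ → Set (α × β)} (h : ∀ n, E n ∈ strips α β) (N : ℕ) :
    (⋃ n ∈ Finset.range N, E n) ∈ strips α β := by
  induction N with
  | zero => simpa using empty_mem_strips
  | succ N ih =>
    rw [Finset.range_add_one, Finset.set_biUnion_insert]
    exact union_mem_strips (h N) ih

/-- Approximation of measurable sets in the product σ-algebra by strips. -/
lemma strips_approx (ρ : Measure (α × β)) [IsFiniteMeasure ρ] {S : Set (α × β)}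
    (hS : MeasurableSet S) : ∀ ε : ℝ≥0∞, ε ≠ 0 → ∃ E ∈ strips α β, ρ (S ∆ E) ≤ ε := by
  have hS' : MeasurableSet[MeasurableSpace.generateFrom
      (Set.image2 (· ×ˢ ·) {s : Set α | MeasurableSet s} {t : Set β | MeasurableSet t})] S := by
    rw [generateFrom_prod]; exact hS
  refine MeasurableSpace.generateFrom_induction _
    (fun T _ => ∀ ε : ℝ≥0∞, ε ≠ 0 → ∃ E ∈ strips α β, ρ (T ∆ E) ≤ ε) ?_ ?_ ?_ ?_ S hS'
  · rintro t ⟨A, hA, B, hB, rfl⟩ - ε hε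
    exact ⟨A ×ˢ B, prod_mem_strips hA hB, by simp⟩
  · intro ε hε
    exact ⟨∅, empty_mem_strips, by simp⟩
  · intro t ht ih ε hε
    obtain ⟨E, hE, hle⟩ := ih ε hε
    exact ⟨Eᶜ, compl_mem_strips hE, by rwa [compl_symmDiff_compl]⟩
  · intro f hf ih ε hε
    have hfm : ∀ n, MeasurableSet (f n) := fun n => by
      have := hf n; rwa [generateFrom_prod] at this
    set T : ℕ → Set (α × β) := fun N => ⋃ n ∈ Finset.range (N + 1), f n with hT
    have hTmono : Monotone T := by
      intro N N' hNN' x hx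
      simp only [hT, Set.mem_iUnion, Finset.mem_range] at hx ⊢
      obtain ⟨n, hn, hxn⟩ := hx
      exact ⟨n, by omega, hxn⟩
    have hTm : ∀ N, MeasurableSet (T N) :=
      fun N => (Finset.range (N + 1) : Finset ℕ).measurableSet_biUnion (fun b _ => hfm b)
    have hTU : (⋃ N, T N) = ⋃ n, f n := by
      ext x
      simp only [hT, Set.mem_iUnion, Finset.mem_range]
      exact ⟨fun ⟨N, n, _, hx⟩ => ⟨n, hx⟩, fun ⟨n, hx⟩ => ⟨n, n, Nat.lt_succ_self n, hx⟩⟩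
    have hsup : ρ (⋃ n, f n) = ⨆ N, ρ (T N) := by
      rw [← hTU]; exact hTmono.measure_iUnion
    by_cases hsmall : ρ (⋃ n, f n) ≤ ε / 2
    · refine ⟨∅, empty_mem_strips, ?_⟩
      simpa [Set.symmDiff_def] using hsmall.trans (ENNReal.half_le_self)
    · have hε2 : ε / 2 ≠ 0 := by
        simp only [ne_eq, ENNReal.div_eq_zero_iff, not_or]
        exact ⟨hε, by norm_num⟩
      have hρfin : ρ (⋃ n, f n) ≠ ⊤ := measure_ne_top _ _
      have hρpos : ρ (⋃ n, f n) ≠ 0 := fun h0 => hsmall (h0 ▸ zero_le)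
      have hlt : ρ (⋃ n, f n) - ε / 2 < ⨆ N, ρ (T N) := by
        rw [← hsup]; exact ENNReal.sub_lt_self hρfin hρpos hε2
      obtain ⟨N, hN⟩ := lt_iSup_iff.mp hlt
      have hTle : ρ (⋃ n, f n) ≤ ρ (T N) + ε / 2 := tsub_le_iff_right.mp hN.le
      set δ : ℝ≥0∞ := ε / 2 / (N + 1 : ℕ) with hδdef
      have hδ : δ ≠ 0 := by
        simp only [hδdef, ne_eq, ENNReal.div_eq_zero_iff, not_or]
        refine ⟨?_, ENNReal.natCast_ne_top _⟩
        simpa [ne_eq, ENNReal.div_eq_zero_iff, not_or] using hε2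
      choose Efun hEs hEd using fun n => ih n δ hδ
      refine ⟨⋃ n ∈ Finset.range (N + 1), Efun n, biUnion_range_mem_strips hEs _, ?_⟩
      have hsub : (⋃ n, f n) ∆ (⋃ n ∈ Finset.range (N + 1), Efun n) ⊆
          ((⋃ n, f n) \ T N) ∪ ⋃ n ∈ Finset.range (N + 1), (f n ∆ Efun n) := by
        intro x hx
        rw [Set.mem_symmDiff] at hx
        rcases hx with ⟨hx1, hx2⟩ | ⟨hx1, hx2⟩
        · by_cases hxT : x ∈ T N
          · simp only [hT, Set.mem_iUnion, Finset.mem_range] at hxT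
            obtain ⟨n, hn, hxn⟩ := hxT
            refine Or.inr (Set.mem_biUnion (Finset.mem_range.2 hn) ?_)
            rw [Set.mem_symmDiff]
            refine Or.inl ⟨hxn, fun hc => hx2 (Set.mem_biUnion (Finset.mem_range.2 hn) hc)⟩
          · exact Or.inl ⟨hx1, hxT⟩
        · simp only [Set.mem_iUnion, Finset.mem_range] at hx1
          obtain ⟨n, hn, hxn⟩ := hx1
          refine Or.inr (Set.mem_biUnion (Finset.mem_range.2 hn) ?_)
          rw [Set.mem_symmDiff]
          exact Or.inr ⟨hxn, fun hc => hx2 (Set.mem_iUnion.2 ⟨n, hc⟩)⟩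
      calc ρ ((⋃ n, f n) ∆ (⋃ n ∈ Finset.range (N + 1), Efun n))
          ≤ ρ (((⋃ n, f n) \ T N) ∪ ⋃ n ∈ Finset.range (N + 1), (f n ∆ Efun n)) :=
            measure_mono hsub
        _ ≤ ρ ((⋃ n, f n) \ T N) + ρ (⋃ n ∈ Finset.range (N + 1), (f n ∆ Efun n)) :=
            measure_union_le _ _
        _ ≤ ε / 2 + ε / 2 := by
            refine add_le_add ?_ ?_
            · have hdiff : ρ ((⋃ n, f n) \ T N) = ρ (⋃ n, f n) - ρ (T N) :=
                measure_diff (by rw [← hTU]; exact Set.subset_iUnion T N)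
                  (hTm N).nullMeasurableSet (measure_ne_top _ _)
              rw [hdiff]
              exact tsub_le_iff_left.mpr hTle
            · calc ρ (⋃ n ∈ Finset.range (N + 1), (f n ∆ Efun n))
                  ≤ ∑ n ∈ Finset.range (N + 1), ρ (f n ∆ Efun n) :=
                    measure_biUnion_finset_le _ _
                _ ≤ ∑ _n ∈ Finset.range (N + 1), δ := Finset.sum_le_sum fun n _ => hEd n
                _ = (N + 1 : ℕ) * δ := by
                    rw [Finset.sum_const, Finset.card_range, nsmul_eq_mul]
                _ ≤ ε / 2 := by
                    rw [hδdef, ENNReal.mul_div_cancel (by exact_mod_cast Nat.succ_ne_zero N)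
                      (ENNReal.natCast_ne_top _)]
        _ = ε := ENNReal.add_halves ε

end Strips
section LemA

open scoped symmDiff

lemma abs_toReal_sub_le_symmDiff {γ : Type*} [MeasurableSpace γ] (μ : Measure γ)
    [IsFiniteMeasure μ] (S E : Set γ) :
    |(μ S).toReal - (μ E).toReal| ≤ (μ (S ∆ E)).toReal := by
  have key : ∀ U V : Set γ, (μ U).toReal ≤ (μ V).toReal + (μ (U ∆ V)).toReal := by
    intro U V
    have hsub : U ⊆ V ∪ (U ∆ V) := by
      intro x hx
      by_cases hxV : x ∈ V
      · exact Or.inl hxV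
      · exact Or.inr (Set.mem_symmDiff.2 (Or.inl ⟨hx, hxV⟩))
    have := (measure_mono hsub).trans (measure_union_le (μ := μ) V (U ∆ V))
    have h2 := ENNReal.toReal_mono
      ((ENNReal.add_lt_top.2 ⟨measure_lt_top _ _, measure_lt_top _ _⟩).ne) this
    rwa [ENNReal.toReal_add (measure_ne_top _ _) (measure_ne_top _ _)] at h2
  have h1 := key S E
  have h2 := key E S
  rw [symmDiff_comm] at h2
  rw [abs_sub_le_iff]
  constructor <;> linarith

variable {Ω : Type*} {𝔊 ℌ : MeasurableSpace Ω} [mΩ : MeasurableSpace Ω] (P : Measure Ω)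
variable [IsProbabilityMeasure P]
variable {α β : Type*} [MeasurableSpace α] [MeasurableSpace β]

/-- The key two-block comparison: the joint law of `(ξ, η)` and the product of the laws differ,
on every measurable set, by at most `phiDep P 𝔊 ℌ`. -/
theorem tvle_pair {ξ : Ω → α} {η : Ω → β} (h𝔊 : 𝔊 ≤ mΩ) (hℌ : ℌ ≤ mΩ)
    (hξ : Measurable[𝔊] ξ) (hη : Measurable[ℌ] η) :
    TVLe (Measure.map (fun ω => (ξ ω, η ω)) P) ((Measure.map ξ P).prod (Measure.map η P))
      (phiDep P 𝔊 ℌ) := by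
  have hmξ : Measurable ξ := hξ.mono h𝔊 le_rfl
  have hmη : Measurable η := hη.mono hℌ le_rfl
  have hpair : Measurable fun ω => (ξ ω, η ω) := hmξ.prodMk hmη
  haveI i1 : IsProbabilityMeasure (Measure.map (fun ω => (ξ ω, η ω)) P) :=
    Measure.isProbabilityMeasure_map hpair.aemeasurable
  haveI i2 : IsProbabilityMeasure (Measure.map ξ P) := Measure.isProbabilityMeasure_map hmξ.aemeasurable
  haveI i3 : IsProbabilityMeasure (Measure.map η P) := Measure.isProbabilityMeasure_map hmη.aemeasurable
  set μ1 := Measure.map (fun ω => (ξ ω, η ω)) P with hμ1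
  set μ2 := (Measure.map ξ P).prod (Measure.map η P) with hμ2
  -- the bound on strips
  have hstrip : ∀ E ∈ strips α β, |(μ1 E).toReal - (μ2 E).toReal| ≤ phiDep P 𝔊 ℌ := by
    rintro E ⟨N, A, B, hA, hB, hd, rfl⟩
    have hrd : Pairwise (Function.onFun Disjoint fun i => A i ×ˢ B i) := fun i j hij =>
      Set.disjoint_left.2 fun p hp hq => Set.disjoint_left.1 (hd hij) hp.1 hq.1
    have hrm : ∀ i, MeasurableSet (A i ×ˢ B i) := fun i => (hA i).prod (hB i)
    have e1 : μ1 (⋃ i, A i ×ˢ B i) = ∑ i, P (ξ ⁻¹' A i ∩ η ⁻¹' B i) := by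
      rw [measure_iUnion hrd hrm, tsum_fintype]
      refine Finset.sum_congr rfl fun i _ => ?_
      rw [hμ1, Measure.map_apply hpair (hrm i), Set.mk_preimage_prod]
    have e2 : μ2 (⋃ i, A i ×ˢ B i) = ∑ i, P (ξ ⁻¹' A i) * P (η ⁻¹' B i) := by
      rw [measure_iUnion hrd hrm, tsum_fintype]
      refine Finset.sum_congr rfl fun i _ => ?_
      rw [hμ2, Measure.prod_prod, Measure.map_apply hmξ (hA i), Measure.map_apply hmη (hB i)]
    rw [e1, e2, ENNReal.toReal_sum (fun i _ => measure_ne_top _ _),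
      ENNReal.toReal_sum (fun i _ => (ENNReal.mul_lt_top (measure_lt_top _ _)
        (measure_lt_top _ _)).ne)]
    have hterm : ∀ i, |(P (ξ ⁻¹' A i ∩ η ⁻¹' B i)).toReal
        - (P (ξ ⁻¹' A i) * P (η ⁻¹' B i)).toReal|
        ≤ phiDep P 𝔊 ℌ * (P (ξ ⁻¹' A i)).toReal := by
      intro i
      have := phiDep_rect P (hξ (hA i)) (hη (hB i))
      rwa [ENNReal.toReal_mul]
    have hsumpa : ∑ i, (P (ξ ⁻¹' A i)).toReal ≤ 1 := by
      have hdpre : Pairwise (Function.onFun Disjoint fun i => ξ ⁻¹' A i) := fun i j hij =>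
        Set.disjoint_left.2 fun x hx hx' => Set.disjoint_left.1 (hd hij) hx hx'
      have : (∑ i, P (ξ ⁻¹' A i)) = P (⋃ i, ξ ⁻¹' A i) := by
        rw [measure_iUnion hdpre (fun i => h𝔊 _ (hξ (hA i))), tsum_fintype]
      calc ∑ i, (P (ξ ⁻¹' A i)).toReal
          = (∑ i, P (ξ ⁻¹' A i)).toReal :=
            (ENNReal.toReal_sum (fun i _ => measure_ne_top _ _)).symm
        _ = (P (⋃ i, ξ ⁻¹' A i)).toReal := by rw [this]
        _ ≤ 1 := by simpa using ENNReal.toReal_mono ENNReal.one_ne_top prob_le_one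
    calc |∑ i, (P (ξ ⁻¹' A i ∩ η ⁻¹' B i)).toReal - ∑ i, (P (ξ ⁻¹' A i) * P (η ⁻¹' B i)).toReal|
        = |∑ i, ((P (ξ ⁻¹' A i ∩ η ⁻¹' B i)).toReal
            - (P (ξ ⁻¹' A i) * P (η ⁻¹' B i)).toReal)| := by rw [Finset.sum_sub_distrib]
      _ ≤ ∑ i, |(P (ξ ⁻¹' A i ∩ η ⁻¹' B i)).toReal
            - (P (ξ ⁻¹' A i) * P (η ⁻¹' B i)).toReal| := Finset.abs_sum_le_sum_abs _ _
      _ ≤ ∑ i, phiDep P 𝔊 ℌ * (P (ξ ⁻¹' A i)).toReal := Finset.sum_le_sum fun i _ => hterm i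
      _ = phiDep P 𝔊 ℌ * ∑ i, (P (ξ ⁻¹' A i)).toReal := by rw [Finset.mul_sum]
      _ ≤ phiDep P 𝔊 ℌ * 1 := mul_le_mul_of_nonneg_left hsumpa (phiDep_nonneg P)
      _ = phiDep P 𝔊 ℌ := mul_one _
  -- approximation
  intro S hS
  refine le_of_forall_pos_le_add fun ε hε => ?_
  have hρ : IsFiniteMeasure (μ1 + μ2) := by infer_instance
  obtain ⟨E, hEs, hEρ⟩ := strips_approx (μ1 + μ2) hS (ENNReal.ofReal (ε / 2))
    (ne_of_gt (ENNReal.ofReal_pos.2 (by linarith)))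
  have hd1 : |(μ1 S).toReal - (μ1 E).toReal| ≤ (μ1 (S ∆ E)).toReal :=
    abs_toReal_sub_le_symmDiff μ1 S E
  have hd2 : |(μ2 E).toReal - (μ2 S).toReal| ≤ (μ2 (S ∆ E)).toReal := by
    rw [abs_sub_comm]
    exact abs_toReal_sub_le_symmDiff μ2 S E
  have hdm : (μ1 (S ∆ E)).toReal + (μ2 (S ∆ E)).toReal ≤ ε := by
    have : μ1 (S ∆ E) + μ2 (S ∆ E) = (μ1 + μ2) (S ∆ E) := (Measure.add_apply _ _ _).symm
    have h2 : (μ1 (S ∆ E) + μ2 (S ∆ E)).toReal ≤ ε / 2 := by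
      rw [this]
      calc ((μ1 + μ2) (S ∆ E)).toReal ≤ (ENNReal.ofReal (ε / 2)).toReal :=
            ENNReal.toReal_mono ENNReal.ofReal_ne_top hEρ
        _ = ε / 2 := ENNReal.toReal_ofReal (by linarith)
    rw [ENNReal.toReal_add (measure_ne_top _ _) (measure_ne_top _ _)] at h2
    linarith
  calc |(μ1 S).toReal - (μ2 S).toReal|
      ≤ |(μ1 S).toReal - (μ1 E).toReal| + |(μ1 E).toReal - (μ2 E).toReal|
        + |(μ2 E).toReal - (μ2 S).toReal| := by
        have t1 := abs_sub_le ((μ1 S).toReal) ((μ1 E).toReal) ((μ2 S).toReal)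
        have t2 := abs_sub_le ((μ1 E).toReal) ((μ2 E).toReal) ((μ2 S).toReal)
        linarith
    _ ≤ (μ1 (S ∆ E)).toReal + phiDep P 𝔊 ℌ + (μ2 (S ∆ E)).toReal :=
        add_le_add (add_le_add hd1 (hstrip E hEs)) hd2
    _ ≤ phiDep P 𝔊 ℌ + ε := by linarith
  
end LemA
section Peel

variable {Ω : Type*} [mΩ : MeasurableSpace Ω] (P : Measure Ω) [IsProbabilityMeasure P]

theorem peel : ∀ (K : ℕ) (E : Fin K → Type u) (iE : ∀ i, MeasurableSpace (E i))
    (W : ∀ i, Ω → E i) (𝔄 𝔅 : Fin K → MeasurableSpace Ω)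
    (_ : ∀ i, 𝔄 i ≤ mΩ) (_ : ∀ i, 𝔅 i ≤ mΩ)
    (_ : ∀ i, Measurable[𝔄 i] (W i))
    (_ : ∀ i j, i < j → Measurable[𝔅 i] (W j))
    (c : Fin K → ℝ) (_ : ∀ i, 0 ≤ c i)
    (_ : ∀ i : Fin K, (i : ℕ) + 1 < K → phiDep P (𝔄 i) (𝔅 i) ≤ c i),
    TVLe (Measure.map (fun ω => fun i => W i ω) P)
      (Measure.pi (fun i => Measure.map (W i) P))
      (∑ i : Fin K, if (i : ℕ) + 1 < K then c i else 0) := by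
  intro K
  induction K with
  | zero =>
    intro E iE W 𝔄 𝔅 h𝔄le h𝔅le h𝔄 h𝔅 c hc hφ
    have hWm : ∀ i, Measurable (W i) := fun i => (h𝔄 i).mono (h𝔄le i) le_rfl
    have hvec : Measurable (fun ω => fun i : Fin 0 => W i ω) := measurable_pi_lambda _ hWm
    haveI : IsProbabilityMeasure (Measure.map (fun ω => fun i : Fin 0 => W i ω) P) :=
      Measure.isProbabilityMeasure_map hvec.aemeasurable
    haveI : ∀ i : Fin 0, IsProbabilityMeasure (Measure.map (W i) P) := fun i =>
      Measure.isProbabilityMeasure_map ((hWm i).aemeasurable)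
    have h0 : (∑ i : Fin 0, if (i : ℕ) + 1 < 0 then c i else 0) = 0 := by simp
    rw [h0]
    exact tvle_of_subsingleton _ _
  | succ K ih =>
    intro E iE W 𝔄 𝔅 h𝔄le h𝔅le h𝔄 h𝔅 c hc hφ
    have hWm : ∀ i, Measurable (W i) := fun i => (h𝔄 i).mono (h𝔄le i) le_rfl
    have hvec : Measurable (fun ω => fun i => W i ω) := measurable_pi_lambda _ hWm
    haveI : IsProbabilityMeasure (Measure.map (fun ω => fun i => W i ω) P) :=
      Measure.isProbabilityMeasure_map hvec.aemeasurable
    haveI iμ : ∀ i, IsProbabilityMeasure (Measure.map (W i) P) := fun i =>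
      Measure.isProbabilityMeasure_map ((hWm i).aemeasurable)
    rcases Nat.eq_zero_or_pos K with rfl | hK
    · have h0 : (∑ i : Fin 1, if (i : ℕ) + 1 < 1 then c i else 0) = 0 := by simp
      rw [h0]
      set e := MeasurableEquiv.piUnique (fun i : Fin 1 => E i) with he
      have h1 : Measure.map e (Measure.map (fun ω => fun i => W i ω) P)
          = Measure.map (W default) P := by
        rw [Measure.map_map e.measurable hvec]
        rfl
      have h2 : Measure.map e (Measure.pi (fun i => Measure.map (W i) P))
          = Measure.map (W default) P := (measurePreserving_piUnique _).map_eq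
      exact TVLe.of_measurePreserving e h1 h2 (TVLe.of_eq rfl)
    · set η := fun ω => fun j : Fin K => W ((0 : Fin (K + 1)).succAbove j) ω with hη
      have hηm𝔅 : Measurable[𝔅 0] η := by
        refine @measurable_pi_lambda Ω (Fin K) (fun j => E ((0 : Fin (K + 1)).succAbove j))
          (𝔅 0) (fun j => iE _) η (fun j => h𝔅 0 _ ?_)
        rw [Fin.succAbove_zero]
        exact j.succ_pos
      have hηm : Measurable η := measurable_pi_lambda _ fun j => hWm _
      haveI : IsProbabilityMeasure (Measure.map η P) :=
        Measure.isProbabilityMeasure_map hηm.aemeasurable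
      have step1 : TVLe (Measure.map (fun ω => (W 0 ω, η ω)) P)
          ((Measure.map (W 0) P).prod (Measure.map η P)) (phiDep P (𝔄 0) (𝔅 0)) :=
        tvle_pair P (h𝔄le 0) (h𝔅le 0) (h𝔄 0) hηm𝔅
      have ihres := ih (fun j => E ((0 : Fin (K + 1)).succAbove j)) _
        (fun j => W ((0 : Fin (K + 1)).succAbove j))
        (fun j => 𝔄 ((0 : Fin (K + 1)).succAbove j))
        (fun j => 𝔅 ((0 : Fin (K + 1)).succAbove j))
        (fun j => h𝔄le _) (fun j => h𝔅le _) (fun j => h𝔄 _)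
        (fun j j' hjj' => h𝔅 _ _ (Fin.succAbove_lt_succAbove_iff.2 hjj'))
        (fun j => c ((0 : Fin (K + 1)).succAbove j)) (fun j => hc _)
        (fun j hj => hφ _ (by
          rw [Fin.succAbove_zero]
          simpa [Fin.val_succ] using Nat.succ_lt_succ hj))
      have t1 : TVLe ((Measure.map (W 0) P).prod (Measure.map η P))
          ((Measure.map (W 0) P).prod (Measure.pi (fun j => Measure.map
            (W ((0 : Fin (K + 1)).succAbove j)) P)))
          (∑ j : Fin K, if (j : ℕ) + 1 < K then c ((0 : Fin (K + 1)).succAbove j) else 0) :=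
        ihres.prod_left _
      have tri := step1.trans t1
      set e := MeasurableEquiv.piFinSuccAbove E 0 with he
      have h1 : Measure.map e (Measure.map (fun ω => fun i => W i ω) P)
          = Measure.map (fun ω => (W 0 ω, η ω)) P := by
        rw [Measure.map_map e.measurable hvec]
        rfl
      have h2 : Measure.map e (Measure.pi (fun i => Measure.map (W i) P))
          = (Measure.map (W 0) P).prod (Measure.pi (fun j => Measure.map
            (W ((0 : Fin (K + 1)).succAbove j)) P)) :=
        (measurePreserving_piFinSuccAbove (fun i => Measure.map (W i) P) 0).map_eq
      have main := TVLe.of_measurePreserving e h1 h2 tri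
      have h01 : ((0 : Fin (K + 1)) : ℕ) + 1 < K + 1 := by
        simpa using Nat.succ_lt_succ hK
      have hsum : (∑ i : Fin (K + 1), if (i : ℕ) + 1 < K + 1 then c i else 0)
          = c 0 + ∑ j : Fin K, if (j : ℕ) + 1 < K then c ((0 : Fin (K + 1)).succAbove j) else 0 := by
        rw [Fin.sum_univ_succAbove (fun i => if (i : ℕ) + 1 < K + 1 then c i else 0) 0]
        congr 1
        · exact if_pos h01
        · refine Finset.sum_congr rfl fun j _ => ?_
          have hv : (((0 : Fin (K + 1)).succAbove j : Fin (K + 1)) : ℕ) = (j : ℕ) + 1 := by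
            rw [Fin.succAbove_zero, Fin.val_succ]
          rw [hv]
          simp [Nat.succ_lt_succ_iff]
      rw [hsum]
      exact main.mono_c (add_le_add (hφ 0 h01) le_rfl)

end Peel
section IntegralBound

variable {γ : Type*} [MeasurableSpace γ] {μ ν : Measure γ}
variable [IsProbabilityMeasure μ] [IsProbabilityMeasure ν]

lemma integrable_of_bounded_meas {f : γ → ℝ} (hfm : Measurable f) {C : ℝ}
    (hC : ∀ x, |f x| ≤ C) : Integrable f μ :=
  (integrable_const C).mono' hfm.aestronglyMeasurable
    (ae_of_all _ fun x => by rw [Real.norm_eq_abs]; exact hC x)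

lemma integral_sub_le_of_tvle_nonneg {c : ℝ} (h : TVLe μ ν c) {f : γ → ℝ}
    (hfm : Measurable f) {M0 : ℝ} (hf0 : ∀ x, 0 ≤ f x) (hfM : ∀ x, f x ≤ M0)
    (hM0 : 0 ≤ M0) :
    |∫ x, f x ∂μ - ∫ x, f x ∂ν| ≤ M0 * c := by
  have habs : ∀ x, |f x| ≤ M0 := fun x => by rw [abs_of_nonneg (hf0 x)]; exact hfM x
  have hint1 : Integrable f μ := integrable_of_bounded_meas hfm habs
  have hint2 : Integrable f ν := integrable_of_bounded_meas hfm habs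
  have key : ∀ (κ : Measure γ), IsProbabilityMeasure κ → Integrable f κ →
      ∫ x, f x ∂κ = ∫ t in Set.Ioi (0:ℝ), (κ {a | t < f a}).toReal := by
    intro κ hκ hκint
    exact hκint.integral_eq_integral_meas_lt (ae_of_all _ hf0)
  -- properties of the layer functions
  have hmeas : ∀ (κ : Measure γ), IsFiniteMeasure κ →
      Measurable (fun t : ℝ => (κ {a | t < f a}).toReal) := by
    intro κ hκ
    exact Measurable.ennreal_toReal (Antitone.measurable
      (fun s t hst => measure_mono (fun a ha => lt_of_le_of_lt hst ha)))
  have hbound : ∀ (κ : Measure γ), IsProbabilityMeasure κ →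
      ∀ t : ℝ, (κ {a | t < f a}).toReal ≤ 1 := fun κ hκ t => by
    simpa using ENNReal.toReal_mono ENNReal.one_ne_top prob_le_one
  have hvanish : ∀ (κ : Measure γ), ∀ t : ℝ, M0 ≤ t → (κ {a | t < f a}).toReal = 0 := by
    intro κ t ht
    have : {a | t < f a} = ∅ := by
      ext a; simp only [Set.mem_setOf_eq, Set.mem_empty_iff_false, iff_false, not_lt]
      exact (hfM a).trans ht
    simp [this]
  have hio : ∀ (κ : Measure γ), IsProbabilityMeasure κ →
      IntegrableOn (fun t : ℝ => (κ {a | t < f a}).toReal) (Set.Ioi 0) := by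
    intro κ hκ
    have h1 : IntegrableOn (fun t : ℝ => (κ {a | t < f a}).toReal) (Set.Ioc 0 M0) := by
      refine Measure.integrableOn_of_bounded (M := 1) (measure_Ioc_lt_top).ne
        ((hmeas κ inferInstance).aestronglyMeasurable) (ae_of_all _ fun t => ?_)
      rw [Real.norm_eq_abs, abs_of_nonneg ENNReal.toReal_nonneg]
      exact hbound κ inferInstance t
    have h2 : IntegrableOn (fun t : ℝ => (κ {a | t < f a}).toReal) (Set.Ioi M0) := by
      refine (integrableOn_zero (s := Set.Ioi M0)).congr_fun ?_ measurableSet_Ioi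
      intro t ht
      exact (hvanish κ t (le_of_lt ht)).symm
    have := h1.union h2
    rwa [Set.Ioc_union_Ioi_eq_Ioi hM0] at this
  rw [key μ inferInstance hint1, key ν inferInstance hint2,
    ← integral_sub (hio μ inferInstance) (hio ν inferInstance)]
  have hptbd : ∀ t ∈ Set.Ioi (0:ℝ),
      ‖(μ {a | t < f a}).toReal - (ν {a | t < f a}).toReal‖
        ≤ (Set.Ioc (0:ℝ) M0).indicator (fun _ => c) t := by
    intro t ht
    by_cases htM : t ≤ M0
    · rw [Set.indicator_of_mem (Set.mem_Ioc.2 ⟨ht, htM⟩), Real.norm_eq_abs]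
      exact h _ (measurableSet_lt measurable_const hfm)
    · rw [Set.indicator_of_notMem (fun hc => htM (Set.mem_Ioc.1 hc).2)]
      rw [hvanish μ t (le_of_not_ge htM), hvanish ν t (le_of_not_ge htM)]
      simp
  have hindint : Integrable ((Set.Ioc (0:ℝ) M0).indicator (fun _ => c))
      (MeasureTheory.volume.restrict (Set.Ioi (0:ℝ))) := by
    refine (IntegrableOn.integrable_indicator ?_ measurableSet_Ioc).restrict
    exact integrableOn_const (measure_Ioc_lt_top).ne
  have := norm_integral_le_of_norm_le hindint
    ((ae_restrict_iff' measurableSet_Ioi).2 (ae_of_all _ hptbd))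
  rw [Real.norm_eq_abs] at this
  refine this.trans ?_
  rw [integral_indicator measurableSet_Ioc]
  rw [Measure.restrict_restrict measurableSet_Ioc]
  have hinter : Set.Ioc (0:ℝ) M0 ∩ Set.Ioi 0 = Set.Ioc 0 M0 :=
    Set.inter_eq_self_of_subset_left (fun x hx => (Set.mem_Ioc.1 hx).1)
  rw [hinter, setIntegral_const, measureReal_def, Real.volume_Ioc, smul_eq_mul]
  have : (ENNReal.ofReal (M0 - 0)).toReal = M0 := by
    rw [ENNReal.toReal_ofReal (by linarith)]; ring_nf
  rw [this]
  
lemma integral_sub_le_of_tvle {c : ℝ} (h : TVLe μ ν c) {f : γ → ℝ}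
    (hfm : Measurable f) {M0 : ℝ} (hfM : ∀ x, |f x| ≤ M0) (hM0 : 0 ≤ M0) :
    |∫ x, f x ∂μ - ∫ x, f x ∂ν| ≤ 2 * M0 * c := by
  set g : γ → ℝ := fun x => f x + M0 with hg
  have hg0 : ∀ x, 0 ≤ g x := fun x => by
    have := abs_le.1 (hfM x); simp only [hg]; linarith [this.1]
  have hgM : ∀ x, g x ≤ 2 * M0 := fun x => by
    have := abs_le.1 (hfM x); simp only [hg]; linarith [this.2]
  have hgm : Measurable g := hfm.add_const M0
  have key := integral_sub_le_of_tvle_nonneg h hgm hg0 hgM (by linarith)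
  have hint1 : Integrable f μ := integrable_of_bounded_meas hfm hfM
  have hint2 : Integrable f ν := integrable_of_bounded_meas hfm hfM
  have e1 : ∫ x, g x ∂μ = (∫ x, f x ∂μ) + M0 := by
    rw [integral_add hint1 (integrable_const M0), integral_const]
    simp
  have e2 : ∫ x, g x ∂ν = (∫ x, f x ∂ν) + M0 := by
    rw [integral_add hint2 (integrable_const M0), integral_const]
    simp
  rw [e1, e2] at key
  simpa using key

end IntegralBound
section Curry

variable {ι : Type*} {κ : ι → Type*} (γ : ∀ i, κ i → Type*) [∀ i k, MeasurableSpace (γ i k)]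

/-- Currying as a measurable equivalence. -/
def mPiCurry : (∀ x : Σ i, κ i, γ x.1 x.2) ≃ᵐ (∀ i, ∀ k, γ i k) where
  toEquiv := Equiv.piCurry γ
  measurable_toFun := by
    refine measurable_pi_lambda _ fun i => measurable_pi_lambda _ fun k => ?_
    exact measurable_pi_apply (⟨i, k⟩ : Σ i, κ i)
  measurable_invFun := by
    refine measurable_pi_lambda _ fun x => ?_
    exact (measurable_pi_apply x.2).comp (measurable_pi_apply x.1)

lemma measurePreserving_mPiCurry [Fintype ι] [DecidableEq ι] [∀ i, Fintype (κ i)]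
    (μs : ∀ x : Σ i, κ i, Measure (γ x.1 x.2)) [∀ x, IsProbabilityMeasure (μs x)] :
    MeasurePreserving (mPiCurry γ) (Measure.pi μs)
      (Measure.pi fun i => Measure.pi fun k => μs ⟨i, k⟩) := by
  have hsymm : Measure.map (mPiCurry γ).symm
      (Measure.pi fun i => Measure.pi fun k => μs ⟨i, k⟩) = Measure.pi μs := by
    refine (Measure.pi_eq fun t ht => ?_).symm
    rw [MeasurableEquiv.map_apply]
    have hpre : (mPiCurry γ).symm ⁻¹' (Set.pi Set.univ t)
        = Set.pi Set.univ fun i => Set.pi Set.univ fun k => t ⟨i, k⟩ := by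
      ext g
      simp only [Set.mem_preimage, Set.mem_pi, Set.mem_univ, forall_true_left]
      constructor
      · intro hg i k
        exact hg ⟨i, k⟩
      · intro hg x
        rcases x with ⟨i, k⟩
        exact hg i k
    rw [hpre, Measure.pi_pi]
    simp_rw [Measure.pi_pi]
    rw [← Finset.univ_sigma_univ, Finset.prod_sigma]
  refine ⟨(mPiCurry γ).measurable, ?_⟩
  rw [← hsymm, Measure.map_map (mPiCurry γ).measurable (mPiCurry γ).symm.measurable]
  simp [MeasurableEquiv.self_comp_symm]

end Curry

lemma iIndepFun_map_pi {Ω' : Type*} [MeasurableSpace Ω'] (P' : Measure Ω')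
    [IsProbabilityMeasure P'] {ι : Type*} [Fintype ι] {κ : ι → Type*}
    [mκ : ∀ i, MeasurableSpace (κ i)] {f : ∀ i, Ω' → κ i} (hfm : ∀ i, Measurable (f i))
    (hindep : iIndepFun f P') :
    Measure.map (fun ω => fun i => f i ω) P' = Measure.pi (fun i => Measure.map (f i) P') := by
  haveI : ∀ i, IsProbabilityMeasure (Measure.map (f i) P') := fun i =>
    Measure.isProbabilityMeasure_map (hfm i).aemeasurable
  refine (Measure.pi_eq fun t ht => ?_).symm
  rw [Measure.map_apply (measurable_pi_lambda _ hfm) (MeasurableSet.univ_pi ht)]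
  have hpre : (fun ω => fun i => f i ω) ⁻¹' (Set.pi Set.univ t) = ⋂ i, f i ⁻¹' t i := by
    ext ω; simp [Set.mem_pi]
  rw [hpre, hindep.meas_iInter (fun i => ⟨t i, ht i, rfl⟩)]
  exact Finset.prod_congr rfl fun i _ => (Measure.map_apply (hfm i) (ht i)).symm
/-- if `U i` is `F (m i) (n i)`-measurable with ordered, separated index intervals,
`a : Fin k₀ → Fin s` assigns each index to a block of a partition, and `U'` consists of mutually
independent copies of the blocks `(U i)_{a i = j}`, then for every bounded Borel `H`,
`|E[H(U₁,…,U_{k₀})] − E[H(U'₁,…,U'_{k₀})]| ≤ 4 sup|H| ∑_{i=2}^{k₀} φ(m_i − n_{i−1})`. -/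
theorem statement1
    {Ω : Type*} [MeasurableSpace Ω] (P : Measure Ω) [IsProbabilityMeasure P]
    {𝓧 : Type*} [MeasurableSpace 𝓧]
    (F : ℤ → ℤ → MeasurableSpace Ω)
    (hFsub : ∀ n m : ℤ, F n m ≤ ‹MeasurableSpace Ω›)
    (hFmono : ∀ n m n₁ m₁ : ℤ, n₁ ≤ n → n ≤ m → m ≤ m₁ → F n m ≤ F n₁ m₁)
    (k₀ s : ℕ) (d : Fin k₀ → ℕ)
    (U : (i : Fin k₀) → Ω → (Fin (d i) → 𝓧))
    (m n : Fin k₀ → ℤ)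
    (hmn : ∀ i, m i ≤ n i)
    (horder : ∀ i j : Fin k₀, i < j → n i < m j)
    (hUmeas : ∀ i, Measurable[F (m i) (n i)] (U i))
    (a : Fin k₀ → Fin s)
    {Ω' : Type*} [MeasurableSpace Ω'] (P' : Measure Ω') [IsProbabilityMeasure P']
    (U' : (i : Fin k₀) → Ω' → (Fin (d i) → 𝓧))
    (hU'meas : ∀ i, Measurable (U' i))
    (hlaw : ∀ j : Fin s,
      Measure.map (fun ω' => fun i : {i : Fin k₀ // a i = j} => U' i.1 ω') P'
        = Measure.map (fun ω => fun i : {i : Fin k₀ // a i = j} => U i.1 ω) P)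
    (hindep : iIndepFun
      (fun j : Fin s => fun ω' => fun i : {i : Fin k₀ // a i = j} => U' i.1 ω') P')
    (H : ((i : Fin k₀) → Fin (d i) → 𝓧) → ℝ) (hHmeas : Measurable H)
    (M : ℝ) (hHbdd : ∀ x, |H x| ≤ M) :
    |(∫ ω, H (fun i => U i ω) ∂P) - ∫ ω', H (fun i => U' i ω') ∂P'|
      ≤ 4 * (⨆ x, |H x|) * ∑ i : Fin k₀,
          (if h : (i : ℕ) + 1 < k₀ then mixPhi P F ((m ⟨(i : ℕ) + 1, h⟩ - n i).toNat) else 0) := by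
  classical
  have hUm : ∀ i, Measurable (U i) := fun i => (hUmeas i).mono (hFsub _ _) le_rfl
  have hVm : Measurable (fun ω => fun i => U i ω) := measurable_pi_lambda _ hUm
  have hV'm : Measurable (fun ω' => fun i => U' i ω') := measurable_pi_lambda _ hU'meas
  set E : Fin k₀ → Type _ := fun i => Fin (d i) → 𝓧 with hE
  set μ := Measure.map (fun ω => fun i => U i ω) P with hμ
  set μ' := Measure.map (fun ω' => fun i => U' i ω') P' with hμ'
  haveI : IsProbabilityMeasure μ := Measure.isProbabilityMeasure_map hVm.aemeasurable
  haveI : IsProbabilityMeasure μ' := Measure.isProbabilityMeasure_map hV'm.aemeasurable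
  haveI : ∀ i, IsProbabilityMeasure (Measure.map (U i) P) := fun i =>
    Measure.isProbabilityMeasure_map (hUm i).aemeasurable
  set π := Measure.pi (fun i => Measure.map (U i) P) with hπ
  haveI : IsProbabilityMeasure π := by rw [hπ]; infer_instance
  set gs : Fin k₀ → ℝ := fun i =>
    if h : (i : ℕ) + 1 < k₀ then mixPhi P F ((m ⟨(i : ℕ) + 1, h⟩ - n i).toNat) else 0 with hgs
  have hgs0 : ∀ i, 0 ≤ gs i := by
    intro i
    rw [hgs]
    dsimp only
    split
    · exact mixPhi_nonneg P F _
    · exact le_rfl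
  have hmono_m : ∀ i j : Fin k₀, i ≤ j → m i ≤ m j := by
    intro i j hij
    rcases eq_or_lt_of_le hij with rfl | h
    · exact le_rfl
    · exact (hmn i).trans (horder i j h).le
  have hkm : ∀ (i : Fin k₀) (h : (i : ℕ) + 1 < k₀),
      n i + (((m ⟨(i : ℕ) + 1, h⟩ - n i).toNat : ℕ) : ℤ) = m ⟨(i : ℕ) + 1, h⟩ := by
    intro i h
    rw [Int.toNat_of_nonneg (sub_nonneg.2 (horder i ⟨(i : ℕ) + 1, h⟩
      (by rw [Fin.lt_def]; exact Nat.lt_succ_self _)).le)]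
    ring
  -- Claim 1 : TVLe μ π (∑ gs)
  set 𝔄 : Fin k₀ → MeasurableSpace Ω := fun i => ⨆ j : {j : ℤ // j ≤ n i}, F j.1 (n i) with h𝔄
  set 𝔅 : Fin k₀ → MeasurableSpace Ω := fun i =>
    if h : (i : ℕ) + 1 < k₀ then
      (⨆ m' : {m' : ℤ // n i + (((m ⟨(i : ℕ) + 1, h⟩ - n i).toNat : ℕ) : ℤ) ≤ m'},
        F (n i + (((m ⟨(i : ℕ) + 1, h⟩ - n i).toNat : ℕ) : ℤ)) m'.1)
    else ⊥ with h𝔅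
  have h𝔄le : ∀ i, 𝔄 i ≤ ‹MeasurableSpace Ω› := fun i => iSup_le fun j => hFsub _ _
  have h𝔅le : ∀ i, 𝔅 i ≤ ‹MeasurableSpace Ω› := by
    intro i
    rw [h𝔅]
    dsimp only
    split
    · exact iSup_le fun m' => hFsub _ _
    · exact bot_le
  have h𝔄meas : ∀ i, Measurable[𝔄 i] (U i) := fun i =>
    (hUmeas i).mono (le_iSup (fun j : {j : ℤ // j ≤ n i} => F j.1 (n i)) ⟨m i, hmn i⟩) le_rfl
  have h𝔅meas : ∀ i j, i < j → Measurable[𝔅 i] (U j) := by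
    intro i j hij
    have h : (i : ℕ) + 1 < k₀ := by
      have h1 := j.isLt
      have h2 : (i : ℕ) < (j : ℕ) := hij
      omega
    have hij' : (⟨(i : ℕ) + 1, h⟩ : Fin k₀) ≤ j := by
      rw [Fin.le_def]
      exact hij
    rw [show 𝔅 i = _ from dif_pos h]
    have hle1 : F (m j) (n j) ≤ F (n i + (((m ⟨(i : ℕ) + 1, h⟩ - n i).toNat : ℕ) : ℤ)) (n j) := by
      refine hFmono _ _ _ _ ?_ (hmn j) le_rfl
      rw [hkm i h]
      exact hmono_m _ _ hij'
    have hmj : n i + (((m ⟨(i : ℕ) + 1, h⟩ - n i).toNat : ℕ) : ℤ) ≤ n j := by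
      rw [hkm i h]
      exact (hmono_m _ _ hij').trans (hmn j)
    exact (hUmeas j).mono (hle1.trans (le_iSup
      (fun m' : {m' : ℤ // n i + (((m ⟨(i : ℕ) + 1, h⟩ - n i).toNat : ℕ) : ℤ) ≤ m'} =>
        F (n i + (((m ⟨(i : ℕ) + 1, h⟩ - n i).toNat : ℕ) : ℤ)) m'.1) ⟨n j, hmj⟩)) le_rfl
  have hφpeel : ∀ i : Fin k₀, (i : ℕ) + 1 < k₀ → phiDep P (𝔄 i) (𝔅 i) ≤ gs i := by
    intro i h
    rw [h𝔅, hgs]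
    dsimp only
    rw [dif_pos h, dif_pos h]
    exact le_mixPhi P F _ (n i)
  have claim1 := peel P k₀ E _ U 𝔄 𝔅 h𝔄le h𝔅le h𝔄meas h𝔅meas gs hgs0 hφpeel
  have hsum1 : (∑ i : Fin k₀, if (i : ℕ) + 1 < k₀ then gs i else 0) = ∑ i, gs i := by
    refine Finset.sum_congr rfl fun i _ => ?_
    by_cases h : (i : ℕ) + 1 < k₀
    · rw [if_pos h]
    · rw [if_neg h, hgs]
      dsimp only
      rw [dif_neg h]
  rw [hsum1] at claim1
  -- Claim 2 : TVLe μ' π (∑ gs)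
  set fib : Fin s → Type _ := fun j => {i : Fin k₀ // a i = j} with hfib
  have hblockm : ∀ j, Measurable (fun ω' => fun i : fib j => U' i.1 ω') :=
    fun j => measurable_pi_lambda _ fun i => hU'meas i.1
  have hblockmP : ∀ j, Measurable (fun ω => fun i : fib j => U i.1 ω) :=
    fun j => measurable_pi_lambda _ fun i => hUm i.1
  haveI : ∀ j, IsProbabilityMeasure (Measure.map (fun ω => fun i : fib j => U i.1 ω) P) :=
    fun j => Measure.isProbabilityMeasure_map (hblockmP j).aemeasurable
  haveI : ∀ j, IsProbabilityMeasure (Measure.pi (fun i : fib j => Measure.map (U i.1) P)) := by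
    intro j; infer_instance
  have hpi' : Measure.map (fun ω' => fun j : Fin s => fun i : fib j => U' i.1 ω') P'
      = Measure.pi (fun j => Measure.map (fun ω' => fun i : fib j => U' i.1 ω') P') :=
    iIndepFun_map_pi P' hblockm hindep
  set σe : (Σ j : Fin s, fib j) ≃ Fin k₀ := Equiv.sigmaFiberEquiv a with hσe
  haveI : ∀ x : Σ j : Fin s, fib j, IsProbabilityMeasure (Measure.map (U (σe x)) P) := by
    intro x; infer_instance
  set gEq : ((i : Fin k₀) → E i) ≃ᵐ ((j : Fin s) → (i : fib j) → E i.1) :=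
    ((MeasurableEquiv.piCongrLeft E σe).symm).trans
      (mPiCurry (fun j (i : fib j) => E i.1)) with hgEq
  have hgV' : (⇑gEq ∘ fun ω' => fun i => U' i ω')
      = fun ω' => fun j => fun i : fib j => U' i.1 ω' := by
    funext ω' j i
    rfl
  have hμ'eq : Measure.map gEq μ'
      = Measure.pi (fun j => Measure.map (fun ω => fun i : fib j => U i.1 ω) P) := by
    rw [hμ', Measure.map_map gEq.measurable hV'm, hgV', hpi']
    congr 1
    funext j
    exact hlaw j
  have hπeq : Measure.map gEq π
      = Measure.pi (fun j => Measure.pi (fun i : fib j => Measure.map (U i.1) P)) := by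
    have h1 := MeasurePreserving.symm _
      (measurePreserving_piCongrLeft (μ := fun i => Measure.map (U i) P) σe)
    have h2 := @measurePreserving_mPiCurry _ _ (fun j (i : fib j) => E i.1) _ _ _ _
      (fun x : Σ j : Fin s, fib j => Measure.map (U (σe x)) P)
      (fun x => Measure.isProbabilityMeasure_map (hUm _).aemeasurable)
    exact (h2.comp h1).map_eq
  -- per-block peeling
  set Kj : Fin s → ℕ := fun j => Fintype.card (fib j) with hKj
  set ej : ∀ j : Fin s, Fin (Kj j) ≃o fib j := fun j => monoEquivOfFin (fib j) rfl with hej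
  have glt : ∀ (j : Fin s) (t : Fin (Kj j)), (t : ℕ) + 1 < Kj j → (((ej j t).1 : ℕ) + 1 < k₀) := by
    intro j t h
    have h1 : ej j t < ej j ⟨(t : ℕ) + 1, h⟩ :=
      (ej j).strictMono (by rw [Fin.lt_def]; exact Nat.lt_succ_self _)
    have h2 : ((ej j t).1 : ℕ) < (((ej j ⟨(t : ℕ) + 1, h⟩).1) : ℕ) := h1
    have h3 := ((ej j ⟨(t : ℕ) + 1, h⟩).1).isLt
    omega
  have hsucc_le : ∀ (j : Fin s) (t t' : Fin (Kj j)) (h : (t : ℕ) + 1 < Kj j), t < t' →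
      (⟨((ej j t).1 : ℕ) + 1, glt j t h⟩ : Fin k₀) ≤ (ej j t').1 := by
    intro j t t' h htt'
    rw [Fin.le_def]
    have h1 : ej j t < ej j t' := (ej j).strictMono htt'
    have h2 : ((ej j t).1 : ℕ) < ((ej j t').1 : ℕ) := h1
    exact h2
  have hblock : ∀ j : Fin s,
      TVLe (Measure.map (fun ω => fun i : fib j => U i.1 ω) P)
        (Measure.pi (fun i : fib j => Measure.map (U i.1) P))
        (∑ t : Fin (Kj j), if (t : ℕ) + 1 < Kj j then gs ((ej j t).1) else 0) := by
    intro j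
    set 𝔄' : Fin (Kj j) → MeasurableSpace Ω := fun t =>
      ⨆ jj : {jj : ℤ // jj ≤ n ((ej j t).1)}, F jj.1 (n ((ej j t).1)) with h𝔄'
    set 𝔅' : Fin (Kj j) → MeasurableSpace Ω := fun t =>
      if h : (t : ℕ) + 1 < Kj j then
        (⨆ m' : {m' : ℤ // n ((ej j t).1)
            + (((m ⟨(((ej j t).1 : ℕ)) + 1, glt j t h⟩ - n ((ej j t).1)).toNat : ℕ) : ℤ) ≤ m'},
          F (n ((ej j t).1)
            + (((m ⟨(((ej j t).1 : ℕ)) + 1, glt j t h⟩ - n ((ej j t).1)).toNat : ℕ) : ℤ)) m'.1)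
      else ⊥ with h𝔅'
    have h𝔄'le : ∀ t, 𝔄' t ≤ ‹MeasurableSpace Ω› := fun t => iSup_le fun jj => hFsub _ _
    have h𝔅'le : ∀ t, 𝔅' t ≤ ‹MeasurableSpace Ω› := by
      intro t
      rw [h𝔅']
      dsimp only
      split
      · exact iSup_le fun m' => hFsub _ _
      · exact bot_le
    have h𝔄'meas : ∀ t, Measurable[𝔄' t] (U ((ej j t).1)) := fun t =>
      (hUmeas _).mono (le_iSup (fun jj : {jj : ℤ // jj ≤ n ((ej j t).1)} =>
        F jj.1 (n ((ej j t).1))) ⟨m _, hmn _⟩) le_rfl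
    have h𝔅'meas : ∀ t t', t < t' → Measurable[𝔅' t] (U ((ej j t').1)) := by
      intro t t' htt'
      have h : (t : ℕ) + 1 < Kj j := by
        have h1 := t'.isLt
        have h2 : (t : ℕ) < (t' : ℕ) := htt'
        omega
      have hle' : (⟨((ej j t).1 : ℕ) + 1, glt j t h⟩ : Fin k₀) ≤ (ej j t').1 :=
        hsucc_le j t t' h htt'
      rw [show 𝔅' t = _ from dif_pos h]
      have hle1 : F (m ((ej j t').1)) (n ((ej j t').1)) ≤ F (n ((ej j t).1)
          + (((m ⟨(((ej j t).1 : ℕ)) + 1, glt j t h⟩ - n ((ej j t).1)).toNat : ℕ) : ℤ))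
          (n ((ej j t').1)) := by
        refine hFmono _ _ _ _ ?_ (hmn _) le_rfl
        rw [hkm _ (glt j t h)]
        exact hmono_m _ _ hle'
      have hmj : n ((ej j t).1)
          + (((m ⟨(((ej j t).1 : ℕ)) + 1, glt j t h⟩ - n ((ej j t).1)).toNat : ℕ) : ℤ)
          ≤ n ((ej j t').1) := by
        rw [hkm _ (glt j t h)]
        exact (hmono_m _ _ hle').trans (hmn _)
      exact (hUmeas _).mono (hle1.trans (le_iSup (fun m' : {m' : ℤ // n ((ej j t).1)
          + (((m ⟨(((ej j t).1 : ℕ)) + 1, glt j t h⟩ - n ((ej j t).1)).toNat : ℕ) : ℤ) ≤ m'} =>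
        F (n ((ej j t).1)
          + (((m ⟨(((ej j t).1 : ℕ)) + 1, glt j t h⟩ - n ((ej j t).1)).toNat : ℕ) : ℤ)) m'.1)
        ⟨n ((ej j t').1), hmj⟩)) le_rfl
    have hφ' : ∀ t : Fin (Kj j), (t : ℕ) + 1 < Kj j →
        phiDep P (𝔄' t) (𝔅' t) ≤ gs ((ej j t).1) := by
      intro t h
      rw [h𝔅', hgs]
      dsimp only
      rw [dif_pos h, dif_pos (glt j t h)]
      exact le_mixPhi P F _ (n ((ej j t).1))
    have hres := peel P (Kj j) (fun t => E ((ej j t).1)) _ (fun t => U ((ej j t).1)) 𝔄' 𝔅'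
      h𝔄'le h𝔅'le h𝔄'meas h𝔅'meas (fun t => gs ((ej j t).1)) (fun t => hgs0 _) hφ'
    -- transfer along the reindexing equivalence
    set pcl := MeasurableEquiv.piCongrLeft (fun i : fib j => E i.1) (ej j).toEquiv with hpcl
    have hrescm : Measurable (fun ω => fun t : Fin (Kj j) => U ((ej j t).1) ω) :=
      measurable_pi_lambda _ fun t => hUm _
    have hmp : Measure.map pcl (Measure.pi fun t => Measure.map (U ((ej j t).1)) P)
        = Measure.pi (fun i : fib j => Measure.map (U i.1) P) :=
      (measurePreserving_piCongrLeft (μ := fun i : fib j => Measure.map (U i.1) P)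
        (ej j).toEquiv).map_eq
    have hmap2 : Measure.map pcl (Measure.map (fun ω => fun t => U ((ej j t).1) ω) P)
        = Measure.map (fun ω => fun i : fib j => U i.1 ω) P := by
      rw [Measure.map_map pcl.measurable hrescm]
      congr 1
      funext ω
      funext i
      obtain ⟨t, rfl⟩ := (ej j).toEquiv.surjective i
      exact MeasurableEquiv.piCongrLeft_apply_apply (ej j).toEquiv _ t
    have hres2 := (hres.map pcl.measurable)
    rw [hmap2, hmp] at hres2
    exact hres2
  haveI : ∀ j, IsProbabilityMeasure
      (Measure.map (fun ω' => fun i : fib j => U' i.1 ω') P') :=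
    fun j => Measure.isProbabilityMeasure_map (hblockm j).aemeasurable
  have hbig := TVLe.pi s (fun j => (i : fib j) → E i.1) _
    (fun j => Measure.map (fun ω => fun i : fib j => U i.1 ω) P)
    (fun j => Measure.pi (fun i : fib j => Measure.map (U i.1) P))
    (fun j => inferInstance) (fun j => inferInstance)
    (fun j => ∑ t : Fin (Kj j), if (t : ℕ) + 1 < Kj j then gs ((ej j t).1) else 0)
    hblock
  have claim2 : TVLe μ' π
      (∑ j, ∑ t : Fin (Kj j), if (t : ℕ) + 1 < Kj j then gs ((ej j t).1) else 0) :=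
    TVLe.of_measurePreserving gEq hμ'eq hπeq hbig
  have hb_le : (∑ j, ∑ t : Fin (Kj j), if (t : ℕ) + 1 < Kj j then gs ((ej j t).1) else 0)
      ≤ ∑ i, gs i := by
    have hperblock : ∀ j,
        (∑ t : Fin (Kj j), if (t : ℕ) + 1 < Kj j then gs ((ej j t).1) else 0)
        ≤ ∑ i ∈ Finset.univ.filter (fun i => a i = j), gs i := by
      intro j
      rw [← Finset.sum_filter]
      rw [← Finset.sum_image (g := fun t : Fin (Kj j) => (ej j t).1)
        (fun x _ y _ hxy => (ej j).injective (Subtype.val_injective hxy))]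
      refine Finset.sum_le_sum_of_subset_of_nonneg ?_ (fun i _ _ => hgs0 i)
      intro i hi
      simp only [Finset.mem_image, Finset.mem_filter, Finset.mem_univ, true_and] at hi ⊢
      obtain ⟨t, -, rfl⟩ := hi
      exact ((ej j t)).2
    calc (∑ j, ∑ t : Fin (Kj j), if (t : ℕ) + 1 < Kj j then gs ((ej j t).1) else 0)
        ≤ ∑ j, ∑ i ∈ Finset.univ.filter (fun i => a i = j), gs i :=
          Finset.sum_le_sum fun j _ => hperblock j
      _ = ∑ i, gs i := Finset.sum_fiberwise _ _ _
  have claim2' : TVLe μ' π (∑ i, gs i) := claim2.mono_c hb_le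
  -- conclusion
  have hfinal : TVLe μ μ' ((∑ i, gs i) + ∑ i, gs i) := claim1.trans claim2'.symm
  have hiμ : ∫ ω, H (fun i => U i ω) ∂P = ∫ x, H x ∂μ :=
    (integral_map hVm.aemeasurable hHmeas.aestronglyMeasurable).symm
  have hiμ' : ∫ ω', H (fun i => U' i ω') ∂P' = ∫ x, H x ∂μ' :=
    (integral_map hV'm.aemeasurable hHmeas.aestronglyMeasurable).symm
  have hΩne : Nonempty Ω := by
    by_contra hcon
    rw [not_nonempty_iff] at hcon
    have h1 : (P Set.univ) = 1 := measure_univ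
    rw [Set.univ_eq_empty_iff.mpr hcon] at h1
    simp [measure_empty] at h1
  obtain ⟨ω₀⟩ := hΩne
  have hxne : Nonempty ((i : Fin k₀) → Fin (d i) → 𝓧) := ⟨fun i => U i ω₀⟩
  have hbdd : ∀ x, |H x| ≤ ⨆ x, |H x| := fun x =>
    le_ciSup ⟨M, by rintro y ⟨x', rfl⟩; exact hHbdd x'⟩ x
  have hMs0 : 0 ≤ ⨆ x, |H x| := (abs_nonneg _).trans (hbdd (Classical.arbitrary _))
  have hkey := integral_sub_le_of_tvle hfinal hHmeas hbdd hMs0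
  rw [hiμ, hiμ']
  refine hkey.trans (le_of_eq ?_)
  ring
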